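/- For every vertex v of T, D''(v) ≤ d(v). -/

import Mathlib

open Finset

lemma cast_two_eq_one_iff (n : ℕ) : ((n : ZMod 2) = 1) ↔ Odd n := by
  rw [← ZMod.natCast_mod n 2, Nat.odd_iff]
  rcases Nat.mod_two_eq_zero_or_one n with h | h <;> rw [h] <;> simp

lemma one_add_cast_eq_one_iff (n : ℕ) : ((1 : ZMod 2) + (n : ZMod 2) = 1) ↔ Even n := by
  constructor
  · intro h
    have h0 : (n : ZMod 2) = 0 := by
      have := congrArg (fun x => x - 1) h
      simpa [add_comm] using this
    rw [← ZMod.natCast_mod n 2] at h0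
    rw [Nat.even_iff]
    rcases Nat.mod_two_eq_zero_or_one n with h2 | h2
    · exact h2
    · rw [h2] at h0; exact absurd h0 (by decide)
  · intro h
    have h0 : (n : ZMod 2) = 0 := by
      rw [← ZMod.natCast_mod n 2, Nat.even_iff.mp h]; simp
    rw [h0, add_zero]

theorem stmt_10
    (V : Type) [Fintype V] [DecidableEq V]
    (root : V) (parent : V → V) (depth : V → ℕ)
    (hdepth_root : depth root = 0)
    (hdepth : ∀ v, v ≠ root → depth v = depth (parent v) + 1)
    (C : V → Finset V)
    (hC : ∀ v w, w ∈ C v ↔ w ≠ root ∧ parent w = v)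
    (l' wt : V → ℕ)
    (hwt : ∀ v, wt v = l' v + ∑ w ∈ C v, wt w)
    (hwt2 : ∀ v, 2 ≤ wt v)
    (r s l : V → ℕ)
    (hr : ∀ v, r v = ((C v).filter fun w => Odd (wt w)).card)
    (hs : ∀ v, s v = ((C v).filter fun w => Even (wt w)).card)
    (hl : ∀ v, l v = l' v + r v)
    (ε : V → ZMod 2)
    (hεroot : ε root = 0)
    (hε : ∀ w, w ≠ root → ε w = ε (parent w) + (wt w : ZMod 2))
    (d : V → ℤ)
    (hd : ∀ v, d v = ∑ w ∈ C v, (wt w : ℤ) * ((wt w : ℤ) - 1))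
    (D' : V → ℤ)
    (hD'_even : ∀ v, ε v = 0 → D' v =
      2 * (s v : ℤ) + ∑ w ∈ (C v).filter (fun w => ε w = 1), (wt w : ℤ) * ((wt w : ℤ) - 1))
    (hD'_odd : ∀ v, ε v = 1 → D' v =
      2 * ((l v : ℤ) + (s v : ℤ)) - (wt v : ℤ) * ((wt v : ℤ) - 1) +
        ∑ w ∈ (C v).filter (fun w => ε w = 1), (wt w : ℤ) * ((wt w : ℤ) - 1))
    (D'' : V → ℤ)
    (hD''_oddleaf : ∀ v, ε v = 1 → C v = ∅ → wt v = 2 → D'' v = D' v - 2)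
    (hD''_oddbig : ∀ v, ε v = 1 → 2 < wt v →
      D'' v = D' v + 2 * (((C v).filter (fun w => wt w = 2)).card : ℤ))
    (hD''_even : ∀ v, ε v = 0 → D'' v = D' v)
    (hD''_oddmid : ∀ v, ε v = 1 → C v ≠ ∅ → wt v = 2 → D'' v = D' v) :
    ∀ v, D'' v ≤ d v := by
  intro v
  have hεc : ∀ w ∈ C v, ε w = ε v + (wt w : ZMod 2) := by
    intro w hw
    rw [hC v w] at hw
    rw [hε w hw.1, hw.2]
  have hterm : ∀ w ∈ C v, (2:ℤ) ≤ (wt w : ℤ) * ((wt w:ℤ) - 1) := by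
    intro w _
    have h2 : (2:ℤ) ≤ (wt w : ℤ) := by exact_mod_cast hwt2 w
    nlinarith
  have hterm0 : ∀ w ∈ C v, (0:ℤ) ≤ (wt w : ℤ) * ((wt w:ℤ) - 1) := by
    intro w hw; linarith [hterm w hw]
  have hcardsum : 2 * (C v).card ≤ ∑ w ∈ C v, wt w := by
    have := Finset.card_nsmul_le_sum (C v) wt 2 (fun w _ => hwt2 w)
    simpa [smul_eq_mul, mul_comm] using this
  have hrs : r v + s v = (C v).card := by
    rw [hr v, hs v]
    have hcongr : (C v).filter (fun w => Even (wt w)) =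
        (C v).filter (fun w => ¬ Odd (wt w)) := by
      apply Finset.filter_congr
      intro w _
      exact Nat.not_odd_iff_even.symm
    rw [hcongr]
    exact Finset.card_filter_add_card_filter_not (fun w => Odd (wt w))
  have hcases : ε v = 0 ∨ ε v = 1 := by
    have : ∀ a : ZMod 2, a = 0 ∨ a = 1 := by decide
    exact this (ε v)
  rcases hcases with hv0 | hv1
  · -- even vertex
    have hfilter : (C v).filter (fun w => ε w = 1) =
        (C v).filter (fun w => Odd (wt w)) := by
      apply Finset.filter_congr
      intro w hw
      rw [hεc w hw, hv0, zero_add]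
      exact cast_two_eq_one_iff (wt w)
    rw [hD''_even v hv0, hD'_even v hv0, hfilter, hd v,
        ← Finset.sum_filter_add_sum_filter_not (C v) (fun w => Odd (wt w))]
    have hs' : (s v : ℤ) = (((C v).filter fun w => ¬ Odd (wt w)).card : ℤ) := by
      rw [hs v]
      congr 2
      apply Finset.filter_congr
      intro w _
      exact Nat.not_odd_iff_even.symm
    have hb : 2 * ((((C v).filter fun w => ¬ Odd (wt w)).card : ℤ)) ≤
        ∑ w ∈ (C v).filter (fun w => ¬ Odd (wt w)), (wt w : ℤ) * ((wt w : ℤ) - 1) := by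
      have := Finset.card_nsmul_le_sum ((C v).filter fun w => ¬ Odd (wt w))
        (fun w => (wt w : ℤ) * ((wt w:ℤ) - 1)) 2
        (fun w hw => hterm w (Finset.mem_filter.mp hw).1)
      simpa [smul_eq_mul, mul_comm] using this
    linarith [hs' ▸ hb]
  · -- odd vertex
    have hfilter : (C v).filter (fun w => ε w = 1) =
        (C v).filter (fun w => Even (wt w)) := by
      apply Finset.filter_congr
      intro w hw
      rw [hεc w hw, hv1]
      exact one_add_cast_eq_one_iff (wt w)
    have hdsplit : d v =
        (∑ w ∈ (C v).filter (fun w => Even (wt w)), (wt w : ℤ) * ((wt w : ℤ) - 1)) +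
        (∑ w ∈ (C v).filter (fun w => ¬ Even (wt w)), (wt w : ℤ) * ((wt w : ℤ) - 1)) := by
      rw [hd v, Finset.sum_filter_add_sum_filter_not]
    have hB : (0:ℤ) ≤
        ∑ w ∈ (C v).filter (fun w => ¬ Even (wt w)), (wt w : ℤ) * ((wt w : ℤ) - 1) :=
      Finset.sum_nonneg (fun w hw => hterm0 w (Finset.mem_filter.mp hw).1)
    have hD'eq := hD'_odd v hv1
    rw [hfilter] at hD'eq
    set A := ∑ w ∈ (C v).filter (fun w => Even (wt w)), (wt w : ℤ) * ((wt w : ℤ) - 1) with hA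
    have hwtv := hwt v
    rcases Nat.lt_or_ge 2 (wt v) with hbig | hsmall
    · -- wt v > 2
      have hL : ((C v).filter (fun w => wt w = 2)).card ≤ (C v).card :=
        Finset.card_filter_le _ _
      have hkey : 2 * ((l v : ℤ) + (s v : ℤ)) +
          2 * (((C v).filter (fun w => wt w = 2)).card : ℤ) ≤
          (wt v : ℤ) * ((wt v : ℤ) - 1) := by
        have hnat : 2 * (l v + s v) + 2 * ((C v).filter (fun w => wt w = 2)).card
            ≤ 2 * wt v := by
          rw [hl v]
          omega
        have h3 : (3:ℤ) ≤ (wt v : ℤ) := by exact_mod_cast hbig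
        have hnat' : 2 * ((l v : ℤ) + (s v : ℤ)) +
            2 * (((C v).filter (fun w => wt w = 2)).card : ℤ) ≤ 2 * (wt v : ℤ) := by
          exact_mod_cast hnat
        nlinarith
      rw [hD''_oddbig v hv1 hbig, hD'eq, hdsplit]
      linarith
    · -- wt v = 2
      have hwv2 : wt v = 2 := le_antisymm hsmall (hwt2 v)
      rcases eq_or_ne (C v) ∅ with hemp | hne
      · -- leaf
        rw [hD''_oddleaf v hv1 hemp hwv2, hD'eq, hdsplit]
        have hr0 : r v = 0 := by rw [hr v, hemp]; simp
        have hs0 : s v = 0 := by rw [hs v, hemp]; simp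
        have hl2 : l v = 2 := by
          rw [hl v, hr0]
          rw [hemp] at hwtv
          simpa [hwv2] using hwtv.symm
        have hA0 : A = 0 := by rw [hA, hemp]; simp
        rw [hl2, hs0, hA0, hwv2]
        have hB0 : (∑ w ∈ (C v).filter (fun w => ¬ Even (wt w)),
            (wt w : ℤ) * ((wt w : ℤ) - 1)) = 0 := by rw [hemp]; simp
        rw [hB0]
        norm_num
      · -- non-leaf, wt v = 2
        obtain ⟨w0, hw0⟩ := Finset.nonempty_iff_ne_empty.mpr hne
        have hsum2 : 2 ≤ ∑ w ∈ C v, wt w :=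
          le_trans (hwt2 w0) (Finset.single_le_sum (fun w _ => Nat.zero_le _) hw0)
        have hl'0 : l' v = 0 := by omega
        have hsumeq : ∑ w ∈ C v, wt w = 2 := by omega
        have hcard1 : (C v).card ≤ 1 := by omega
        have hls1 : l v + s v ≤ 1 := by
          rw [hl v]
          omega
        have hls1' : (l v : ℤ) + (s v : ℤ) ≤ 1 := by exact_mod_cast hls1
        rw [hD''_oddmid v hv1 hne hwv2, hD'eq, hdsplit, hwv2]
        push_cast
        linarith
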